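/- With the notation of the previous statement, equality ∫_Y |v|² d(f_#μ) = ∫_X |u|² dμ holds if and only if u = v ∘ f holds μ-almost everywhere on X. -/

import Mathlib

open MeasureTheory
open scoped ENNReal

/-- **Equality case in Lemma 2.4 of [AmLiSa] (`ljensen`)**: with `v` the density of
`f_#(u μ)` with respect to `f_# μ`, equality `∫ |v|² d f_#μ = ∫ |u|² dμ` holds if and
only if `u = v ∘ f` μ-almost everywhere. -/
theorem density_pushforward_l2_eq_iff
    {X Y : Type*} [MeasurableSpace X] [TopologicalSpace X] [PolishSpace X] [BorelSpace X]
    [MeasurableSpace Y] [TopologicalSpace Y] [PolishSpace Y] [BorelSpace Y]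
    {m : ℕ} (μ : Measure X) [IsProbabilityMeasure μ]
    (u : X → EuclideanSpace ℝ (Fin m)) (hu : MemLp u 2 μ)
    (f : X → Y) (hf : Measurable f)
    (v : Y → EuclideanSpace ℝ (Fin m)) (hv : MemLp v 2 (μ.map f))
    (hdens : (μ.map f).withDensityᵥ v = (μ.withDensityᵥ u).map f) :
    (∫⁻ y, (‖v y‖₊ : ℝ≥0∞) ^ 2 ∂(μ.map f) = ∫⁻ x, (‖u x‖₊ : ℝ≥0∞) ^ 2 ∂μ) ↔
      u =ᵐ[μ] fun x => v (f x) := by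
  classical
  set ν := μ.map f with hνdef
  haveI : IsProbabilityMeasure ν := Measure.isProbabilityMeasure_map hf.aemeasurable
  -- strongly measurable representative of `v`
  set v' : Y → EuclideanSpace ℝ (Fin m) := hv.1.mk v with hv'def
  have hv'sm : StronglyMeasurable v' := hv.1.stronglyMeasurable_mk
  have hvv' : v =ᵐ[ν] v' := hv.1.ae_eq_mk
  have hv'2 : MemLp v' 2 ν := hv.ae_eq hvv'
  set w : X → EuclideanSpace ℝ (Fin m) := fun x => v' (f x) with hwdef
  have hwvf : (fun x => v (f x)) =ᵐ[μ] w := ae_of_ae_map hf.aemeasurable hvv'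
  have hwsm : StronglyMeasurable w := hv'sm.comp_measurable hf
  have hw2 : MemLp w 2 μ := by
    refine ⟨hwsm.aestronglyMeasurable, ?_⟩
    have h := eLpNorm_map_measure (p := 2) hv'2.1 hf.aemeasurable
    calc eLpNorm w 2 μ = eLpNorm v' 2 ν := h.symm
    _ < ⊤ := hv'2.2
  have huint : Integrable u μ := hu.integrable one_le_two
  have hvint : Integrable v ν := hv.integrable one_le_two
  have hv'int : Integrable v' ν := hv'2.integrable one_le_two
  -- the defining property of the density, as set integrals
  have hset : ∀ t : Set Y, MeasurableSet t →
      ∫ y in t, v' y ∂ν = ∫ x in f ⁻¹' t, u x ∂μ := by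
    intro t ht
    have h1 : (ν.withDensityᵥ v) t = ∫ y in t, v y ∂ν := withDensityᵥ_apply hvint ht
    have h2 : ((μ.withDensityᵥ u).map f) t = ∫ x in f ⁻¹' t, u x ∂μ := by
      rw [VectorMeasure.map_apply _ hf ht, withDensityᵥ_apply huint (hf ht)]
    have h3 : ∫ y in t, v y ∂ν = ∫ y in t, v' y ∂ν :=
      integral_congr_ae (ae_restrict_of_ae hvv')
    rw [← h3, ← h1, hdens, h2]
  -- the sub-σ-algebra generated by `f`
  have hm' : MeasurableSpace.comap f inferInstance ≤ ‹MeasurableSpace X› := hf.comap_le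
  haveI : SigmaFinite (μ.trim hm') := inferInstance
  -- componentwise data
  have hui_int : ∀ i, Integrable (fun x => u x i) μ := fun i => by
    simpa [PiLp.proj_apply] using (EuclideanSpace.proj (𝕜 := ℝ) i).integrable_comp huint
  have hui_mem : ∀ i, MemLp (fun x => u x i) 2 μ := fun i => by
    simpa [Function.comp_def, PiLp.proj_apply] using
      (EuclideanSpace.proj (𝕜 := ℝ) i).comp_memLp' hu
  have hwi_mem : ∀ i, MemLp (fun x => w x i) 2 μ := fun i => by
    simpa [Function.comp_def, PiLp.proj_apply] using
      (EuclideanSpace.proj (𝕜 := ℝ) i).comp_memLp' hw2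
  have hwi_int : ∀ i, Integrable (fun x => w x i) μ := fun i =>
    (hwi_mem i).integrable one_le_two
  have hf' : @Measurable X Y (MeasurableSpace.comap f inferInstance) _ f := Measurable.of_comap_le le_rfl
  have hwi_sm' : ∀ i, StronglyMeasurable[MeasurableSpace.comap f inferInstance] (fun x => w x i) := fun i =>
    (EuclideanSpace.proj (𝕜 := ℝ) i).continuous.comp_stronglyMeasurable
      (hv'sm.comp_measurable hf')
  have hv'i_meas : ∀ i, AEStronglyMeasurable (fun y => v' y i) ν := fun i =>
    ((EuclideanSpace.proj (𝕜 := ℝ) i).continuous.comp_stronglyMeasurable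
      hv'sm).aestronglyMeasurable
  -- each component of `w` is a conditional expectation
  have hcond : ∀ i, (fun x => w x i) =ᵐ[μ] μ[fun x => u x i | MeasurableSpace.comap f inferInstance] := by
    intro i
    refine ae_eq_condExp_of_forall_setIntegral_eq hm' (hui_int i)
      (fun s _ _ => (hwi_int i).integrableOn)
      (fun s hs _ => ?_) ((hwi_sm' i).aestronglyMeasurable )
    rcases MeasurableSpace.measurableSet_comap.mp hs with ⟨t, ht, rfl⟩
    calc ∫ x in f ⁻¹' t, w x i ∂μ
        = ∫ y in t, v' y i ∂ν := (setIntegral_map ht (hv'i_meas i) hf.aemeasurable).symm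
      _ = (EuclideanSpace.proj (𝕜 := ℝ) i) (∫ y in t, v' y ∂ν) := by
          simpa [PiLp.proj_apply] using
            (EuclideanSpace.proj (𝕜 := ℝ) i).integral_comp_comm hv'int.integrableOn
      _ = (EuclideanSpace.proj (𝕜 := ℝ) i) (∫ x in f ⁻¹' t, u x ∂μ) := by rw [hset t ht]
      _ = ∫ x in f ⁻¹' t, u x i ∂μ := by
          simpa [PiLp.proj_apply] using
            ((EuclideanSpace.proj (𝕜 := ℝ) i).integral_comp_comm huint.integrableOn).symm
  -- integrability of products
  have hmul_int : ∀ (a b : X → ℝ), MemLp a 2 μ → MemLp b 2 μ →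
      Integrable (fun x => a x * b x) μ := by
    intro a b ha hb
    have h1 : MemLp (a • b) 1 μ :=
      hb.smul ha
    have := memLp_one_iff_integrable.mp h1
    exact this
  -- the key orthogonality identity, componentwise
  have hprod : ∀ i, ∫ x, w x i * u x i ∂μ = ∫ x, w x i * w x i ∂μ := by
    intro i
    have hint1 : Integrable ((fun x => w x i) * fun x => u x i) μ := by
      have := hmul_int _ _ (hwi_mem i) (hui_mem i)
      exact this
    have hpull : μ[(fun x => w x i) * fun x => u x i | MeasurableSpace.comap f inferInstance]
        =ᵐ[μ] (fun x => w x i) * μ[fun x => u x i | MeasurableSpace.comap f inferInstance] :=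
      condExp_mul_of_stronglyMeasurable_left (hwi_sm' i) hint1 (hui_int i)
    have e2 : ((fun x => w x i) * μ[fun x => u x i | MeasurableSpace.comap f inferInstance]) =ᵐ[μ] fun x => w x i * w x i := by
      filter_upwards [hcond i] with x hx
      simp [Pi.mul_apply, ← hx]
    calc ∫ x, w x i * u x i ∂μ
        = ∫ x, ((fun x => w x i) * fun x => u x i) x ∂μ := rfl
      _ = ∫ x, (μ[(fun x => w x i) * fun x => u x i | MeasurableSpace.comap f inferInstance]) x ∂μ :=
          (integral_condExp hm').symm
      _ = ∫ x, ((fun x => w x i) * μ[fun x => u x i | MeasurableSpace.comap f inferInstance]) x ∂μ :=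
          integral_congr_ae hpull
      _ = ∫ x, w x i * w x i ∂μ := integral_congr_ae e2
  -- the key orthogonality identity
  have hinner : ∀ (a b : X → EuclideanSpace ℝ (Fin m)) (x : X),
      (inner ℝ (a x) (b x) : ℝ) = ∑ i, a x i * b x i := by
    intro a b x
    simp [PiLp.inner_apply, RCLike.inner_apply, mul_comm]
  have hinner_int : ∀ (a b : X → EuclideanSpace ℝ (Fin m)), MemLp a 2 μ → MemLp b 2 μ →
      Integrable (fun x => (inner ℝ (a x) (b x) : ℝ)) μ := by
    intro a b ha hb
    have : Integrable (fun x => ∑ i, a x i * b x i) μ := by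
      apply integrable_finset_sum
      intro i _
      have ha' : MemLp (fun x => a x i) 2 μ := by
        simpa [Function.comp_def, PiLp.proj_apply] using
          (EuclideanSpace.proj (𝕜 := ℝ) i).comp_memLp' ha
      have hb' : MemLp (fun x => b x i) 2 μ := by
        simpa [Function.comp_def, PiLp.proj_apply] using
          (EuclideanSpace.proj (𝕜 := ℝ) i).comp_memLp' hb
      exact hmul_int _ _ ha' hb'
    exact this.congr (Filter.Eventually.of_forall fun x => (hinner a b x).symm)
  have key : ∫ x, (inner ℝ (w x) (u x) : ℝ) ∂μ = ∫ x, (inner ℝ (w x) (w x) : ℝ) ∂μ := by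
    have e1 : ∫ x, (inner ℝ (w x) (u x) : ℝ) ∂μ = ∑ i, ∫ x, w x i * u x i ∂μ := by
      rw [← integral_finset_sum _ fun i _ =>
        hmul_int _ _ (hwi_mem i) (hui_mem i)]
      exact integral_congr_ae (Filter.Eventually.of_forall fun x => hinner w u x)
    have e2 : ∫ x, (inner ℝ (w x) (w x) : ℝ) ∂μ = ∑ i, ∫ x, w x i * w x i ∂μ := by
      rw [← integral_finset_sum _ fun i _ =>
        hmul_int _ _ (hwi_mem i) (hwi_mem i)]
      exact integral_congr_ae (Filter.Eventually.of_forall fun x => hinner w w x)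
    rw [e1, e2]
    exact Finset.sum_congr rfl fun i _ => hprod i
  -- norm-squared integrability and the lintegral/integral dictionary
  have hnormsq_int : ∀ (g : X → EuclideanSpace ℝ (Fin m)), MemLp g 2 μ →
      Integrable (fun x => ‖g x‖ ^ 2) μ := by
    intro g hg
    refine (hinner_int g g hg hg).congr (Filter.Eventually.of_forall fun x => ?_)
    exact real_inner_self_eq_norm_sq _
  have hlint : ∀ (g : X → EuclideanSpace ℝ (Fin m)), MemLp g 2 μ →
      ∫⁻ x, (‖g x‖₊ : ℝ≥0∞) ^ 2 ∂μ = ENNReal.ofReal (∫ x, ‖g x‖ ^ 2 ∂μ) := by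
    intro g hg
    have hint : Integrable (fun x => ((‖g x‖₊ ^ 2 : NNReal) : ℝ)) μ := by
      refine (hnormsq_int g hg).congr (Filter.Eventually.of_forall fun x => ?_)
      simp [coe_nnnorm]
    have h := lintegral_coe_eq_integral (fun x => ‖g x‖₊ ^ 2) hint
    calc ∫⁻ x, (‖g x‖₊ : ℝ≥0∞) ^ 2 ∂μ
        = ∫⁻ x, ((‖g x‖₊ ^ 2 : NNReal) : ℝ≥0∞) ∂μ := by simp [ENNReal.coe_pow]
      _ = ENNReal.ofReal (∫ x, ((‖g x‖₊ ^ 2 : NNReal) : ℝ) ∂μ) := h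
      _ = ENNReal.ofReal (∫ x, ‖g x‖ ^ 2 ∂μ) := by congr 1
  -- reduce the left-hand lintegral to an integral over `μ`
  have hL : ∫⁻ y, (‖v y‖₊ : ℝ≥0∞) ^ 2 ∂(μ.map f) = ∫⁻ x, (‖w x‖₊ : ℝ≥0∞) ^ 2 ∂μ := by
    have h1 : ∫⁻ y, (‖v y‖₊ : ℝ≥0∞) ^ 2 ∂ν = ∫⁻ y, (‖v' y‖₊ : ℝ≥0∞) ^ 2 ∂ν :=
      lintegral_congr_ae (hvv'.mono fun y hy => by simp only [hy])
    rw [← hνdef, h1]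
    exact lintegral_map ((hv'sm.measurable.nnnorm.coe_nnreal_ennreal).pow_const 2) hf
  constructor
  · intro h
    rw [hL, hlint w hw2, hlint u hu] at h
    have hBA : ∫ x, ‖w x‖ ^ 2 ∂μ = ∫ x, ‖u x‖ ^ 2 ∂μ := by
      refine (ENNReal.ofReal_eq_ofReal_iff ?_ ?_).mp h
      · exact integral_nonneg fun x => sq_nonneg _
      · exact integral_nonneg fun x => sq_nonneg _
    have hzero : ∫ x, ‖u x - w x‖ ^ 2 ∂μ = 0 := by
      have expand : (fun x => ‖u x - w x‖ ^ 2)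
          = fun x => ‖u x‖ ^ 2 - 2 * (inner ℝ (u x) (w x) : ℝ) + ‖w x‖ ^ 2 := by
        funext x; exact norm_sub_sq_real _ _
      have hint_b : Integrable (fun x => 2 * (inner ℝ (u x) (w x) : ℝ)) μ :=
        (hinner_int u w hu hw2).const_mul 2
      have hint_a : Integrable (fun x => ‖u x‖ ^ 2 - 2 * (inner ℝ (u x) (w x) : ℝ)) μ :=
        (hnormsq_int u hu).sub hint_b
      rw [expand, integral_add hint_a (hnormsq_int w hw2),
        integral_sub (hnormsq_int u hu) hint_b, integral_const_mul]
      have hcomm : ∫ x, (inner ℝ (u x) (w x) : ℝ) ∂μ = ∫ x, (inner ℝ (w x) (u x) : ℝ) ∂μ :=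
        integral_congr_ae (Filter.Eventually.of_forall fun x => real_inner_comm _ _)
      have hww : ∫ x, (inner ℝ (w x) (w x) : ℝ) ∂μ = ∫ x, ‖w x‖ ^ 2 ∂μ :=
        integral_congr_ae (Filter.Eventually.of_forall fun x => real_inner_self_eq_norm_sq _)
      rw [hcomm, key, hww, hBA]
      ring
    have hae : (fun x => ‖u x - w x‖ ^ 2) =ᵐ[μ] 0 := by
      have := (integral_eq_zero_iff_of_nonneg_ae
        (Filter.Eventually.of_forall fun x => sq_nonneg _)
        (hnormsq_int _ (hu.sub hw2))).mp hzero
      exact this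
    have huw : u =ᵐ[μ] w := by
      filter_upwards [hae] with x hx
      have : ‖u x - w x‖ ^ 2 = 0 := hx
      have h0 : u x - w x = 0 := by
        rw [pow_eq_zero_iff two_ne_zero, norm_eq_zero] at this
        exact this
      exact sub_eq_zero.mp h0
    exact huw.trans hwvf.symm
  · intro h
    have h' : u =ᵐ[μ] w := h.trans hwvf
    rw [hL]
    exact (lintegral_congr_ae (h'.mono fun x hx => by simp only [hx])).symm
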